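/- Let (σ_i)_{i ∈ Fin n} be an abelian maximal CDP family (σ_i ∘ σ_j = σ_j ∘ σ_i for all i, j), and let (E_j)_{j ∈ Fin n} be its conjugated family. Then E_i = σ_i⁻¹ for every i ∈ Fin n. -/
import Mathlib

/-- For an abelian maximal CDP family with conjugated family `(E_j)`: `E_i = σ_i⁻¹`. -/
theorem conjugated_family_eq_inv {n : ℕ} [NeZero n] (σ : Fin n → Equiv.Perm (Fin n))
    (hcdp : ∀ i j, i ≠ j → ∀ k, σ i k ≠ σ j k)
    (hnorm : ∀ i, σ i 0 = i)
    (hab : ∀ i j, σ i * σ j = σ j * σ i)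
    (E : Fin n → Equiv.Perm (Fin n)) (hE : ∀ j k, E j (σ k j) = k) :
    ∀ i, E i = (σ i)⁻¹ := by
  intro i
  ext x
  have hinj : Function.Injective (fun k => σ k i) := by
    intro a b h
    by_contra hne
    exact hcdp a b hne i h
  have hsurj : Function.Surjective (fun k => σ k i) :=
    Finite.surjective_of_injective hinj
  obtain ⟨k, hk⟩ := hsurj x
  simp only at hk
  have hcomm : σ k i = σ i k := by
    have := congrArg (fun f => f (0 : Fin n)) (hab k i)
    simp only [Equiv.Perm.mul_apply, hnorm] at this
    simpa [hnorm] using this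
  rw [← hk, hE]
  rw [hcomm]
  simp
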